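/- If n ≡ 2 (mod 3) and n ≥ 5, then the number of minimum dominating sets of the path P_n equals ⌈n/3⌉ + 1. -/

import Mathlib

open Finset SimpleGraph

/-- `S` is a dominating set of `G`: every vertex outside `S` has a neighbor in `S`. -/
def domSet {V : Type*} (G : SimpleGraph V) (S : Finset V) : Prop :=
  ∀ v, v ∉ S → ∃ u ∈ S, G.Adj u v

/-- The domination number `γ(G)`: least cardinality of a dominating set. -/
noncomputable def domNum {V : Type*} [Fintype V] (G : SimpleGraph V) : ℕ :=
  sInf {k | ∃ S : Finset V, domSet G S ∧ S.card = k}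

/-- The dominion `ζ(G)`: the number of dominating sets of minimum cardinality. -/
noncomputable def dominion {V : Type*} [Fintype V] (G : SimpleGraph V) : ℕ :=
  Nat.card {S : Finset V // domSet G S ∧ S.card = domNum G}

namespace Stmt7Aux

attribute [local instance] Classical.propDecidable

/-- The candidate minimum dominating sets, indexed by `j`. -/
def D (n j : ℕ) : Finset (Fin n) :=
  univ.filter (fun v => v.val % 3 = if v.val / 3 < j then 1 else 0)

lemma mem_D {n j : ℕ} {v : Fin n} :
    v ∈ D n j ↔ v.val % 3 = (if v.val / 3 < j then 1 else 0) := by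
  simp [D]

/-- Each closed neighborhood in the path graph has at most 3 vertices. -/
lemma ball_card {n : ℕ} (s : Fin n) :
    (univ.filter (fun v : Fin n => s = v ∨ (pathGraph n).Adj s v)).card ≤ 3 := by
  have h := Finset.card_le_card_of_injOn (f := Fin.val)
    (s := univ.filter (fun v : Fin n => s = v ∨ (pathGraph n).Adj s v))
    (t := ({s.val - 1, s.val, s.val + 1} : Finset ℕ)) ?_ ?_
  · refine h.trans ?_
    refine (card_insert_le _ _).trans ?_
    refine Nat.succ_le_succ ?_
    refine (card_insert_le _ _).trans ?_
    simp
  · intro v hv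
    simp only [mem_coe, mem_filter, mem_univ, true_and] at hv
    simp only [mem_coe, mem_insert, mem_singleton]
    rcases hv with rfl | hv
    · omega
    · rw [pathGraph_adj] at hv
      omega
  · intro a _ b _ hab
    exact Fin.val_injective hab

/-- If every vertex of `P` is equal or adjacent to some vertex of `T`,
then `|P| ≤ 3 |T|`. -/
lemma cover_count {n : ℕ} (P T : Finset (Fin n))
    (hPT : ∀ v ∈ P, ∃ u ∈ T, u = v ∨ (pathGraph n).Adj u v) :
    P.card ≤ 3 * T.card := by
  have hsub : P ⊆ T.biUnion
      (fun s => univ.filter (fun v => s = v ∨ (pathGraph n).Adj s v)) := by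
    intro v hv
    obtain ⟨u, hu, huv⟩ := hPT v hv
    exact mem_biUnion.2 ⟨u, hu, by simp [huv]⟩
  calc P.card ≤ _ := card_le_card hsub
    _ ≤ ∑ s ∈ T, (univ.filter (fun v => s = v ∨ (pathGraph n).Adj s v)).card :=
        card_biUnion_le
    _ ≤ ∑ _s ∈ T, 3 := sum_le_sum (fun s _ => ball_card s)
    _ = 3 * T.card := by rw [sum_const, smul_eq_mul, mul_comm]

/-- There are at least `b - a` vertices with values in `[a, b)`. -/
lemma card_interval {n : ℕ} (hn : 0 < n) (a b : ℕ) (hb : b ≤ n) :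
    b - a ≤ (univ.filter (fun v : Fin n => a ≤ v.val ∧ v.val < b)).card := by
  have h := Finset.card_le_card_of_injOn
    (f := fun x : ℕ => (⟨(x + a) % n, Nat.mod_lt _ hn⟩ : Fin n))
    (s := range (b - a)) (t := univ.filter (fun v : Fin n => a ≤ v.val ∧ v.val < b)) ?_ ?_
  · simpa using h
  · intro x hx
    simp only [mem_coe, mem_range] at hx
    have hxa : (x + a) % n = x + a := Nat.mod_eq_of_lt (by omega)
    simp only [mem_coe, mem_filter, mem_univ, true_and, hxa]
    omega
  · intro x hx y hy hxy
    simp only [mem_range, Finset.coe_range, Set.mem_Iio] at hx hy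
    have hxa : (x + a) % n = x + a := Nat.mod_eq_of_lt (by omega)
    have hya : (y + a) % n = y + a := Nat.mod_eq_of_lt (by omega)
    have := congrArg Fin.val hxy
    simp only [hxa, hya] at this
    omega

section Main

variable {n k : ℕ}

lemma count_left (hnk : n = 3 * k + 2) {S : Finset (Fin n)}
    (hS : domSet (pathGraph n) S) (m : ℕ) (hm : m ≤ k) :
    m + 1 ≤ (S.filter (fun v => v.val ≤ 3 * m + 1)).card := by
  have h1 : 3 * m + 1 ≤
      (univ.filter (fun v : Fin n => 0 ≤ v.val ∧ v.val < 3 * m + 1)).card := by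
    have := card_interval (n := n) (by omega) 0 (3 * m + 1) (by omega)
    omega
  have h2 := cover_count (univ.filter (fun v : Fin n => 0 ≤ v.val ∧ v.val < 3 * m + 1))
    (S.filter (fun v => v.val ≤ 3 * m + 1)) ?_
  · omega
  · intro v hv
    simp only [mem_filter, mem_univ, true_and] at hv
    by_cases hvS : v ∈ S
    · exact ⟨v, mem_filter.2 ⟨hvS, by omega⟩, Or.inl rfl⟩
    · obtain ⟨u, hu, hadj⟩ := hS v hvS
      rw [pathGraph_adj] at hadj
      exact ⟨u, mem_filter.2 ⟨hu, by omega⟩, Or.inr (pathGraph_adj.2 hadj)⟩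

lemma count_right (hnk : n = 3 * k + 2) {S : Finset (Fin n)}
    (hS : domSet (pathGraph n) S) (m : ℕ) (hm : m ≤ k) :
    k + 1 - m ≤ (S.filter (fun v => ¬ v.val < 3 * m)).card := by
  have h1 : 3 * (k - m) + 1 ≤
      (univ.filter (fun v : Fin n => 3 * m + 1 ≤ v.val ∧ v.val < n)).card := by
    have := card_interval (n := n) (by omega) (3 * m + 1) n (le_refl n)
    omega
  have h2 := cover_count (univ.filter (fun v : Fin n => 3 * m + 1 ≤ v.val ∧ v.val < n))
    (S.filter (fun v => ¬ v.val < 3 * m)) ?_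
  · omega
  · intro v hv
    simp only [mem_filter, mem_univ, true_and] at hv
    by_cases hvS : v ∈ S
    · exact ⟨v, mem_filter.2 ⟨hvS, by omega⟩, Or.inl rfl⟩
    · obtain ⟨u, hu, hadj⟩ := hS v hvS
      rw [pathGraph_adj] at hadj
      exact ⟨u, mem_filter.2 ⟨hu, by omega⟩, Or.inr (pathGraph_adj.2 hadj)⟩

/-- The pair-set `E m = S ∩ {3m, 3m+1}`. -/
def E (S : Finset (Fin n)) (m : ℕ) : Finset (Fin n) :=
  S.filter (fun v => v.val = 3 * m ∨ v.val = 3 * m + 1)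

lemma E_nonempty (hnk : n = 3 * k + 2) {S : Finset (Fin n)}
    (hS : domSet (pathGraph n) S) (hcard : S.card = k + 1) (m : ℕ) (hm : m ≤ k) :
    1 ≤ (E S m).card := by
  have hl := count_left hnk hS m hm
  have hr := count_right hnk hS m hm
  have hsplit : (S.filter (fun v => v.val < 3 * m)).card
      + (S.filter (fun v => ¬ v.val < 3 * m)).card = S.card :=
    Finset.card_filter_add_card_filter_not (s := S) (p := fun v => v.val < 3 * m)
  have hsub : S.filter (fun v => v.val ≤ 3 * m + 1) ⊆
      S.filter (fun v => v.val < 3 * m) ∪ E S m := by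
    intro v hv
    simp only [mem_filter, mem_union, E] at hv ⊢
    obtain ⟨hvS, hvle⟩ := hv
    by_cases h : v.val < 3 * m
    · exact Or.inl ⟨hvS, h⟩
    · exact Or.inr ⟨hvS, by omega⟩
  have hu := (card_le_card hsub).trans (card_union_le _ _)
  omega

lemma sum_E_cards (hnk : n = 3 * k + 2) {S : Finset (Fin n)}
    (hS : domSet (pathGraph n) S) (hcard : S.card = k + 1) :
    ((range (k + 1)).biUnion (E S)).card = ∑ m ∈ range (k + 1), (E S m).card := by
  apply card_biUnion
  intro a _ b _ hab
  show Disjoint (E S a) (E S b)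
  rw [Finset.disjoint_left]
  intro v hv hv'
  simp only [E, mem_filter] at hv hv'
  omega

lemma S_structure (hnk : n = 3 * k + 2) {S : Finset (Fin n)}
    (hS : domSet (pathGraph n) S) (hcard : S.card = k + 1) :
    S = (range (k + 1)).biUnion (E S) ∧ ∀ m ≤ k, (E S m).card = 1 := by
  have hsum := sum_E_cards hnk hS hcard
  have hsub : (range (k + 1)).biUnion (E S) ⊆ S := by
    intro v hv
    simp only [mem_biUnion, E, mem_filter] at hv
    obtain ⟨m, _, hvS, _⟩ := hv
    exact hvS
  have hge : k + 1 ≤ ∑ m ∈ range (k + 1), (E S m).card := by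
    calc k + 1 = ∑ _m ∈ range (k + 1), 1 := by simp
      _ ≤ _ := sum_le_sum (fun m hm => E_nonempty hnk hS hcard m (by
          simp only [mem_range] at hm; omega))
  have hle : ∑ m ∈ range (k + 1), (E S m).card ≤ k + 1 := by
    have := card_le_card hsub
    omega
  have hSeq : S = (range (k + 1)).biUnion (E S) := by
    apply (Finset.eq_of_subset_of_card_le hsub (by omega)).symm
  refine ⟨hSeq, ?_⟩
  intro m hm
  by_contra hne
  have h2 : 2 ≤ (E S m).card := by
    have := E_nonempty hnk hS hcard m hm
    omega
  have : ∑ m' ∈ range (k + 1), (E S m').card > k + 1 := by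
    have hlt : ∑ m' ∈ range (k + 1), 1 < ∑ m' ∈ range (k + 1), (E S m').card := by
      apply Finset.sum_lt_sum
      · intro i hi
        exact E_nonempty hnk hS hcard i (by simp only [mem_range] at hi; omega)
      · exact ⟨m, mem_range.2 (by omega), by omega⟩
    simpa using hlt
  omega

/-- `Pm S m` : `3m+1 ∈ S`. -/
def Pm (S : Finset (Fin n)) (m : ℕ) : Prop := ∃ v ∈ S, v.val = 3 * m + 1

/-- `Qm S m` : `3m ∈ S`. -/
def Qm (S : Finset (Fin n)) (m : ℕ) : Prop := ∃ v ∈ S, v.val = 3 * m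

lemma exactly_one (hnk : n = 3 * k + 2) {S : Finset (Fin n)}
    (hS : domSet (pathGraph n) S) (hcard : S.card = k + 1) (m : ℕ) (hm : m ≤ k) :
    Pm S m ↔ ¬ Qm S m := by
  obtain ⟨_, hone⟩ := S_structure hnk hS hcard
  have h1 := hone m hm
  constructor
  · rintro ⟨v, hv, hv1⟩ ⟨w, hw, hw1⟩
    have hvE : v ∈ E S m := mem_filter.2 ⟨hv, Or.inr hv1⟩
    have hwE : w ∈ E S m := mem_filter.2 ⟨hw, Or.inl hw1⟩
    have hvw : v ≠ w := by
      intro h; rw [h] at hv1; omega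
    have : 2 ≤ (E S m).card := Finset.one_lt_card.2 ⟨v, hvE, w, hwE, hvw⟩
    omega
  · intro hq
    have hne : (E S m).Nonempty := Finset.card_pos.1 (by omega)
    obtain ⟨v, hv⟩ := hne
    simp only [E, mem_filter] at hv
    rcases hv.2 with h | h
    · exact absurd ⟨v, hv.1, h⟩ hq
    · exact ⟨v, hv.1, h⟩

lemma no_mod2 (hnk : n = 3 * k + 2) {S : Finset (Fin n)}
    (hS : domSet (pathGraph n) S) (hcard : S.card = k + 1) {v : Fin n} (hv : v ∈ S) :
    v.val % 3 ≠ 2 := by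
  obtain ⟨hSeq, _⟩ := S_structure hnk hS hcard
  rw [hSeq] at hv
  simp only [mem_biUnion, E, mem_filter] at hv
  obtain ⟨m, _, _, h⟩ := hv
  omega

lemma mono_step (hnk : n = 3 * k + 2) {S : Finset (Fin n)}
    (hS : domSet (pathGraph n) S) (hcard : S.card = k + 1) (m : ℕ) (hm : m < k)
    (hP : ¬ Pm S m) : ¬ Pm S (m + 1) := by
  have hvn : 3 * m + 2 < n := by omega
  set v : Fin n := ⟨3 * m + 2, hvn⟩ with hvdef
  have hvS : v ∉ S := by
    intro h
    exact no_mod2 hnk hS hcard h (by simp [hvdef])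
  obtain ⟨u, hu, hadj⟩ := hS v hvS
  rw [pathGraph_adj] at hadj
  simp only [hvdef] at hadj
  have hu3 : u.val = 3 * m + 1 ∨ u.val = 3 * m + 3 := by omega
  rcases hu3 with h | h
  · exact absurd ⟨u, hu, h⟩ hP
  · have hq : Qm S (m + 1) := ⟨u, hu, by omega⟩
    have := exactly_one hnk hS hcard (m + 1) (by omega)
    tauto

lemma hard_direction (hnk : n = 3 * k + 2) {S : Finset (Fin n)}
    (hS : domSet (pathGraph n) S) (hcard : S.card = k + 1) :
    ∃ j ≤ k + 1, S = D n j := by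
  classical
  have hTne : ¬ Pm S (k + 1) := by
    rintro ⟨v, hv, hval⟩
    have := v.isLt
    omega
  have hex : ∃ m, ¬ Pm S m := ⟨k + 1, hTne⟩
  obtain ⟨j, hPj, hPlt, hjle⟩ : ∃ j, ¬ Pm S j ∧ (∀ m, m < j → Pm S m) ∧ j ≤ k + 1 := by
    refine ⟨Nat.find hex, Nat.find_spec hex, ?_, Nat.find_le hTne⟩
    intro m hm
    by_contra h
    exact absurd (Nat.find_min hex hm) (by tauto)
  have hPge : ∀ m, j ≤ m → m ≤ k → ¬ Pm S m := by
    intro m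
    induction m with
    | zero => intro h1 _; have : j = 0 := by omega
              rw [← this]; exact hPj
    | succ m ih =>
      intro h1 h2
      rcases Nat.lt_or_ge j (m + 1) with h | h
      · exact mono_step hnk hS hcard m (by omega) (ih (by omega) (by omega))
      · have : j = m + 1 := by omega
        rw [← this]; exact hPj
  refine ⟨j, hjle, ?_⟩
  obtain ⟨hSeq, _⟩ := S_structure hnk hS hcard
  ext v
  rw [mem_D]
  constructor
  · intro hv
    have hv' := hv
    rw [hSeq] at hv'
    simp only [mem_biUnion, E, mem_filter] at hv'
    obtain ⟨m, hmr, _, hval⟩ := hv'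
    simp only [mem_range] at hmr
    rcases hval with h | h
    · -- v.val = 3m, so ¬ Pm S m, so j ≤ m
      have hq : Qm S m := ⟨v, hv, h⟩
      have hnp : ¬ Pm S m := by
        have := exactly_one hnk hS hcard m (by omega)
        tauto
      have hjm : ¬ (m < j) := fun hc => hnp (hPlt m hc)
      rw [if_neg (by omega : ¬ v.val / 3 < j)]
      omega
    · -- v.val = 3m+1, so Pm S m, so m < j
      have hp : Pm S m := ⟨v, hv, h⟩
      have hjm : m < j := by
        by_contra hc
        exact hPge m (by omega) (by omega) hp
      rw [if_pos (by omega : v.val / 3 < j)]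
      omega
  · intro hv
    have hmk : v.val / 3 ≤ k := by have := v.isLt; omega
    by_cases hmj : v.val / 3 < j
    · rw [if_pos hmj] at hv
      obtain ⟨u, hu, hval⟩ := hPlt (v.val / 3) hmj
      have : u = v := Fin.val_injective (by omega)
      rwa [← this]
    · rw [if_neg hmj] at hv
      have hnp : ¬ Pm S (v.val / 3) := hPge _ (by omega) hmk
      have hq : Qm S (v.val / 3) := by
        have := exactly_one hnk hS hcard (v.val / 3) hmk
        tauto
      obtain ⟨u, hu, hval⟩ := hq
      have : u = v := Fin.val_injective (by omega)
      rwa [← this]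

lemma D_dominating (hnk : n = 3 * k + 2) (j : ℕ) :
    domSet (pathGraph n) (D n j) := by
  intro v hv
  rw [mem_D] at hv
  have hvlt := v.isLt
  by_cases hmj : v.val / 3 < j
  · rw [if_pos hmj] at hv
    -- v.val % 3 ≠ 1
    by_cases h0 : v.val % 3 = 0
    · -- neighbor v+1, value 3m+1
      have hlt : v.val + 1 < n := by omega
      refine ⟨⟨v.val + 1, hlt⟩, ?_, ?_⟩
      · rw [mem_D]
        split_ifs with h <;> simp_all <;> omega
      · rw [pathGraph_adj]; right; simp
    · -- v.val % 3 = 2, neighbor v-1 = 3m+1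
      have h2 : v.val % 3 = 2 := by omega
      have hlt : v.val - 1 < n := by omega
      refine ⟨⟨v.val - 1, hlt⟩, ?_, ?_⟩
      · rw [mem_D]
        split_ifs with h <;> simp_all <;> omega
      · rw [pathGraph_adj]; left; simp; omega
  · rw [if_neg hmj] at hv
    -- v.val % 3 ≠ 0
    by_cases h1 : v.val % 3 = 1
    · -- neighbor v-1 = 3m
      have hlt : v.val - 1 < n := by omega
      refine ⟨⟨v.val - 1, hlt⟩, ?_, ?_⟩
      · rw [mem_D]
        split_ifs with h <;> simp_all <;> omega
      · rw [pathGraph_adj]; left; simp; omega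
    · -- v.val % 3 = 2, neighbor v+1 = 3(m+1)
      have h2 : v.val % 3 = 2 := by omega
      have hlt : v.val + 1 < n := by omega
      refine ⟨⟨v.val + 1, hlt⟩, ?_, ?_⟩
      · rw [mem_D]
        split_ifs with h <;> simp_all <;> omega
      · rw [pathGraph_adj]; right; simp

lemma D_card (hnk : n = 3 * k + 2) (j : ℕ) : (D n j).card = k + 1 := by
  rw [← Finset.card_range (k + 1)]
  apply Finset.card_nbij (i := fun v => v.val / 3)
  · intro v hv
    rw [mem_coe, mem_D] at hv
    have := v.isLt
    simp only [mem_coe, mem_range]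
    omega
  · intro u hu v hv huv
    simp only [mem_coe, mem_D] at hu hv
    simp only at huv
    apply Fin.val_injective
    by_cases h : u.val / 3 < j
    · rw [if_pos h] at hu
      rw [if_pos (huv ▸ h)] at hv
      omega
    · rw [if_neg h] at hu
      rw [if_neg (huv ▸ h)] at hv
      omega
  · intro m hm
    simp only [Finset.coe_range, Set.mem_Iio] at hm
    by_cases h : m < j
    · have hlt : 3 * m + 1 < n := by omega
      refine ⟨⟨3 * m + 1, hlt⟩, ?_, by show (3 * m + 1) / 3 = m; omega⟩
      simp only [mem_coe, mem_D]
      show (3 * m + 1) % 3 = if (3 * m + 1) / 3 < j then 1 else 0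
      rw [if_pos (by omega : (3 * m + 1) / 3 < j)]
      omega
    · have hlt : 3 * m < n := by omega
      refine ⟨⟨3 * m, hlt⟩, ?_, by show (3 * m) / 3 = m; omega⟩
      simp only [mem_coe, mem_D]
      show (3 * m) % 3 = if (3 * m) / 3 < j then 1 else 0
      rw [if_neg (by omega : ¬ (3 * m) / 3 < j)]
      omega

lemma domNum_eq (hnk : n = 3 * k + 2) : domNum (pathGraph n) = k + 1 := by
  apply le_antisymm
  · exact Nat.sInf_le ⟨D n 0, D_dominating hnk 0, D_card hnk 0⟩
  · refine le_csInf ⟨k + 1, ⟨D n 0, D_dominating hnk 0, D_card hnk 0⟩⟩ ?_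
    rintro b ⟨S, hS, rfl⟩
    have h := count_left hnk hS k (le_refl k)
    calc k + 1 ≤ (S.filter (fun v => v.val ≤ 3 * k + 1)).card := h
      _ ≤ S.card := card_filter_le _ _

lemma D_injOn (hnk : n = 3 * k + 2) :
    Set.InjOn (D n) ↑(range (k + 2)) := by
  have key : ∀ a b : ℕ, a < b → b ≤ k + 1 → D n a ≠ D n b := by
    intro a b hab hb heq
    have hlt : 3 * a + 1 < n := by omega
    have h1 : (⟨3 * a + 1, hlt⟩ : Fin n) ∈ D n b := by
      rw [mem_D]
      show (3 * a + 1) % 3 = if (3 * a + 1) / 3 < b then 1 else 0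
      rw [if_pos (by omega : (3 * a + 1) / 3 < b)]
      omega
    rw [← heq, mem_D] at h1
    have h2 : (3 * a + 1) % 3 = if (3 * a + 1) / 3 < a then 1 else 0 := h1
    rw [if_neg (by omega : ¬ (3 * a + 1) / 3 < a)] at h2
    omega
  intro a ha b hb hab
  simp only [Finset.coe_range, Set.mem_Iio] at ha hb
  rcases lt_trichotomy a b with h | h | h
  · exact absurd hab (key a b h (by omega))
  · exact h
  · exact absurd hab.symm (key b a h (by omega))

end Main

end Stmt7Aux

theorem stmt7 (n : ℕ) (hn : 5 ≤ n) (hmod : n % 3 = 2) :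
    dominion (pathGraph n) = n / 3 + 2 := by
  set k := n / 3 with hk
  have hnk : n = 3 * k + 2 := by omega
  have hdn := Stmt7Aux.domNum_eq hnk
  have key : ∀ S : Finset (Fin n),
      (domSet (pathGraph n) S ∧ S.card = domNum (pathGraph n)) ↔
      S ∈ (range (k + 2)).image (Stmt7Aux.D n) := by
    intro S
    rw [hdn]
    constructor
    · rintro ⟨hS, hcard⟩
      obtain ⟨j, hj, rfl⟩ := Stmt7Aux.hard_direction hnk hS hcard
      exact mem_image.2 ⟨j, mem_range.2 (by omega), rfl⟩
    · intro hS
      obtain ⟨j, _, rfl⟩ := mem_image.1 hS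
      exact ⟨Stmt7Aux.D_dominating hnk j, Stmt7Aux.D_card hnk j⟩
  rw [dominion]
  rw [Nat.card_congr (Equiv.subtypeEquivRight key)]
  rw [Nat.card_eq_fintype_card, Fintype.card_coe]
  rw [Finset.card_image_of_injOn (Stmt7Aux.D_injOn hnk)]
  rw [card_range]
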